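/- Let k be a natural number, E = EuclideanSpace ℝ (Fin k), O ⊆ E an open set, K ≥ 0, and b : E → E a vector field that is Lipschitz on O (LipschitzOnWith K b O). Let p ∈ O, let δ > 0, let O₀ ⊆ O be an open neighborhood of p, and let φ : ℝ → E → E be a local flow of b on O₀: for every y ∈ O₀, φ 0 y = y, and for every t with |t| < δ one has φ t y ∈ O and the curve s ↦ φ s y has derivative b (φ t y) at t (HasDerivAt). Then there exists A > 0 with 1/A ≤ δ such that for all y, z ∈ O₀ and all real t with |t| ≤ 1/A, ‖(φ t z − φ t y) − (z − y)‖ ≤ A * |t| * ‖z − y‖. -/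

import Mathlib

open Set Real

/-- Near a point, the flow of a Lipschitz vector field moves pairs of points
almost in parallel: `‖(φ_t z − φ_t y) − (z − y)‖ ≤ A t ‖z − y‖` for small `t`. -/
theorem flow_of_lipschitz_vector_field_almost_parallel
    (k : ℕ) (O : Set (EuclideanSpace ℝ (Fin k))) (hO : IsOpen O)
    (K : NNReal) (b : EuclideanSpace ℝ (Fin k) → EuclideanSpace ℝ (Fin k))
    (hb : LipschitzOnWith K b O)
    (p : EuclideanSpace ℝ (Fin k)) (hp : p ∈ O)
    (δ : ℝ) (hδ : 0 < δ)
    (O₀ : Set (EuclideanSpace ℝ (Fin k))) (hO₀open : IsOpen O₀) (hpO₀ : p ∈ O₀)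
    (hO₀sub : O₀ ⊆ O)
    (φ : ℝ → EuclideanSpace ℝ (Fin k) → EuclideanSpace ℝ (Fin k))
    (hφ0 : ∀ y ∈ O₀, φ 0 y = y)
    (hφ : ∀ y ∈ O₀, ∀ t : ℝ, |t| < δ →
      φ t y ∈ O ∧ HasDerivAt (fun s => φ s y) (b (φ t y)) t) :
    ∃ A : ℝ, 0 < A ∧ 1 / A ≤ δ ∧
      ∀ y ∈ O₀, ∀ z ∈ O₀, ∀ t : ℝ, |t| ≤ 1 / A →
        ‖(φ t z - φ t y) - (z - y)‖ ≤ A * |t| * ‖z - y‖ := by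
  set A : ℝ := max (2 / δ) ((K : ℝ) * Real.exp 1 + 1) with hAdef
  have hA2δ : 2 / δ ≤ A := le_max_left _ _
  have hAK : (K : ℝ) * Real.exp 1 + 1 ≤ A := le_max_right _ _
  have hexp1 : (1 : ℝ) ≤ Real.exp 1 := by
    have := Real.add_one_le_exp (1 : ℝ); linarith
  have hA0 : 0 < A := lt_of_lt_of_le (by positivity) hAK
  have hKA : (K : ℝ) ≤ A := by nlinarith [K.coe_nonneg]
  set T : ℝ := 1 / A with hTdef
  have hT0 : 0 ≤ T := by positivity
  have hTδ : T < δ := by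
    have h1 : 1 / A ≤ δ / 2 := by
      rw [div_le_div_iff₀ hA0 (by norm_num)]
      calc (1:ℝ) * 2 = (2/δ) * δ := by field_simp
        _ ≤ A * δ := mul_le_mul_of_nonneg_right hA2δ hδ.le
        _ = δ * A := mul_comm _ _
    linarith
  have hKT : (K : ℝ) * T ≤ 1 := by
    rw [hTdef, mul_one_div, div_le_one hA0]; exact hKA
  refine ⟨A, hA0, le_of_lt hTδ, ?_⟩
  intro y hy z hz t ht
  set F : ℝ → EuclideanSpace ℝ (Fin k) := fun s => φ s z - φ s y with hFdef
  set F' : ℝ → EuclideanSpace ℝ (Fin k) := fun s => b (φ s z) - b (φ s y) with hF'def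
  have hFd : ∀ s : ℝ, |s| < δ → HasDerivAt F (F' s) s := fun s hs =>
    ((hφ z hz s hs).2.sub (hφ y hy s hs).2)
  have hbound : ∀ s : ℝ, |s| < δ → ‖F' s‖ ≤ (K : ℝ) * ‖F s‖ := by
    intro s hs
    have h1 := (hφ z hz s hs).1
    have h2 := (hφ y hy s hs).1
    have := hb.dist_le_mul _ h1 _ h2
    simpa [hF'def, hFdef, dist_eq_norm] using this
  have habs : ∀ s : ℝ, s ∈ Icc (-T) T → |s| < δ := by
    intro s hs
    rcases hs with ⟨h1, h2⟩
    rw [abs_lt]; constructor <;> linarith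
  -- Grönwall bound on both sides
  have hG : ∀ s : ℝ, s ∈ Icc (-T) T → ‖F s‖ ≤ ‖z - y‖ * Real.exp ((K : ℝ) * T) := by
    have hF0 : ‖F 0‖ ≤ ‖z - y‖ := by
      rw [hFdef]; simp only; rw [hφ0 z hz, hφ0 y hy]
    have fwd : ∀ s ∈ Icc (0 : ℝ) T, ‖F s‖ ≤ ‖z - y‖ * Real.exp ((K : ℝ) * T) := by
      have key := norm_le_gronwallBound_of_norm_deriv_right_le (f := F) (f' := F')
        (δ := ‖z - y‖) (K := (K : ℝ)) (ε := 0) (a := 0) (b := T)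
        (fun s hs => ((hFd s (habs s ⟨by linarith [hs.1], hs.2⟩)).continuousAt).continuousWithinAt)
        (fun s hs => (hFd s (habs s ⟨by linarith [hs.1], le_of_lt hs.2⟩)).hasDerivWithinAt)
        hF0
        (fun s hs => by
          have := hbound s (habs s ⟨by linarith [hs.1], le_of_lt hs.2⟩)
          linarith)
      intro s hs
      have := key s hs
      rw [gronwallBound_ε0] at this
      refine this.trans ?_
      have : Real.exp ((K : ℝ) * (s - 0)) ≤ Real.exp ((K : ℝ) * T) := by
        apply Real.exp_le_exp.2
        have := hs.2
        nlinarith [K.coe_nonneg, hs.1]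
      nlinarith [norm_nonneg (z - y), Real.exp_pos ((K : ℝ) * (s - 0))]
    have bwd : ∀ s ∈ Icc (0 : ℝ) T, ‖F (-s)‖ ≤ ‖z - y‖ * Real.exp ((K : ℝ) * T) := by
      set G : ℝ → EuclideanSpace ℝ (Fin k) := fun u => F (-u) with hGdef
      set G' : ℝ → EuclideanSpace ℝ (Fin k) := fun u => -F' (-u) with hG'def
      have hGd : ∀ u : ℝ, |u| < δ → HasDerivAt G (G' u) u := by
        intro u hu
        have h1 : HasDerivAt (fun v : ℝ => -v) (-1 : ℝ) u := (hasDerivAt_neg u)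
        have h2 := (hFd (-u) (by rwa [abs_neg])).scomp u h1
        simpa [hGdef, hG'def, Function.comp_def] using h2
      have habs' : ∀ u : ℝ, u ∈ Icc (0:ℝ) T → |u| < δ := fun u hu =>
        habs u ⟨by linarith [hu.1], hu.2⟩
      have habs'' : ∀ u : ℝ, u ∈ Ico (0:ℝ) T → |u| < δ := fun u hu =>
        habs u ⟨by linarith [hu.1], le_of_lt hu.2⟩
      have hG0 : ‖G 0‖ ≤ ‖z - y‖ := by simpa [hGdef] using hF0
      have key := norm_le_gronwallBound_of_norm_deriv_right_le (f := G) (f' := G')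
        (δ := ‖z - y‖) (K := (K : ℝ)) (ε := 0) (a := 0) (b := T)
        (fun u hu => ((hGd u (habs' u hu)).continuousAt).continuousWithinAt)
        (fun u hu => (hGd u (habs'' u hu)).hasDerivWithinAt)
        hG0
        (fun u hu => by
          have h := hbound (-u) (by rw [abs_neg]; exact habs'' u hu)
          have : ‖G' u‖ = ‖F' (-u)‖ := by simp [hG'def]
          rw [this]
          simpa [hGdef] using (by linarith : ‖F' (-u)‖ ≤ (K:ℝ) * ‖F (-u)‖ + 0))
      intro s hs
      have := key s hs
      rw [gronwallBound_ε0] at this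
      have h2 : Real.exp ((K : ℝ) * (s - 0)) ≤ Real.exp ((K : ℝ) * T) := by
        apply Real.exp_le_exp.2
        nlinarith [K.coe_nonneg, hs.1, hs.2]
      have h3 : ‖F (-s)‖ = ‖G s‖ := by simp [hGdef]
      rw [h3]
      nlinarith [norm_nonneg (z - y), Real.exp_pos ((K : ℝ) * (s - 0))]
    intro s hs
    rcases le_or_gt 0 s with h | h
    · exact fwd s ⟨h, hs.2⟩
    · have := bwd (-s) ⟨by linarith, by linarith [hs.1]⟩
      simpa using this
  -- derivative bound on Icc (-T) T
  have hC : ∀ s : ℝ, s ∈ Icc (-T) T → ‖F' s‖ ≤ A * ‖z - y‖ := by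
    intro s hs
    have h1 := hbound s (habs s hs)
    have h2 := hG s hs
    have h3 : Real.exp ((K : ℝ) * T) ≤ Real.exp 1 := Real.exp_le_exp.2 hKT
    calc ‖F' s‖ ≤ (K:ℝ) * ‖F s‖ := h1
      _ ≤ (K:ℝ) * (‖z - y‖ * Real.exp ((K:ℝ)*T)) :=
          mul_le_mul_of_nonneg_left h2 K.coe_nonneg
      _ ≤ (K:ℝ) * (‖z - y‖ * Real.exp 1) :=
          mul_le_mul_of_nonneg_left
            (mul_le_mul_of_nonneg_left h3 (norm_nonneg _)) K.coe_nonneg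
      _ = ((K:ℝ) * Real.exp 1) * ‖z - y‖ := by ring
      _ ≤ A * ‖z - y‖ := mul_le_mul_of_nonneg_right (by linarith) (norm_nonneg _)
  have hmem_t : t ∈ Icc (-T) T := by
    rw [mem_Icc]; constructor <;> [linarith [neg_abs_le t]; linarith [le_abs_self t]]
  have hmem_0 : (0 : ℝ) ∈ Icc (-T) T := ⟨by linarith, hT0⟩
  have mvt := Convex.norm_image_sub_le_of_norm_hasDerivWithin_le
    (f := F) (f' := F') (s := Icc (-T) T) (C := A * ‖z - y‖)
    (fun s hs => (hFd s (habs s hs)).hasDerivWithinAt) hC (convex_Icc _ _) hmem_0 hmem_t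
  have hF0eq : F 0 = z - y := by
    rw [hFdef]; simp only; rw [hφ0 z hz, hφ0 y hy]
  rw [hF0eq] at mvt
  have mvt' : ‖F t - (z - y)‖ ≤ A * ‖z - y‖ * ‖t - 0‖ := mvt
  calc ‖(φ t z - φ t y) - (z - y)‖ = ‖F t - (z - y)‖ := rfl
    _ ≤ A * ‖z - y‖ * ‖t - 0‖ := mvt'
    _ = A * |t| * ‖z - y‖ := by rw [sub_zero, Real.norm_eq_abs]; ring
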